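/- At t = 1, Catalan operators reduce to multiplication by Catalan functions: for any indexed root ideal (Ψ,μ) and any g ∈ Λ_ℤ, the specialized operator satisfies H^Ψ_μ|_{t=1}(g) = (H^Ψ_μ|_{t=1}(1))·g = H(Ψ;μ)(x;1)·g. -/

import Mathlib

open scoped BigOperators Classical

noncomputable section

/-- The coefficient ring `ℤ[t]`, with `t = Polynomial.X`. -/
abbrev CR : Type := Polynomial ℤ

/-- The ring of symmetric functions `Λ = ℤ[t][h₁,h₂,…]`, modeled as the polynomial
ring over `ℤ[t]` in countably many variables, where the variable `X n`
represents the complete homogeneous symmetric function `h_{n+1}`. -/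
abbrev SymF : Type := MvPolynomial ℕ CR

/-- `t` as an element of `Λ`. -/
def tC : SymF := MvPolynomial.C Polynomial.X

/-- The complete homogeneous symmetric function `h_d` for `d : ℤ`:
`h_0 = 1` and `h_d = 0` for `d < 0`. -/
def hh (d : ℤ) : SymF :=
  if d < 0 then 0 else if d = 0 then 1 else MvPolynomial.X (d.toNat - 1)

/-- The (possibly non-partition-indexed) Schur function
`s_γ = det (h_{γ_i + j - i})_{1 ≤ i,j ≤ ℓ}`. -/
def schur {ℓ : ℕ} (γ : Fin ℓ → ℤ) : SymF :=
  (Matrix.of fun i j : Fin ℓ => hh (γ i + (j : ℤ) - (i : ℤ))).det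

/-- The poset of positive roots `Δ⁺_ℓ = {(i,j) : 1 ≤ i < j ≤ ℓ}` (0-based here). -/
def Dplus (ℓ : ℕ) : Finset (Fin ℓ × Fin ℓ) := Finset.univ.filter fun p => p.1 < p.2

/-- `Ψ` is a root ideal: an upper order ideal of `Δ⁺_ℓ`, where
`(a,b) ≤ (c,d)` iff `a ≥ c` and `b ≤ d`. -/
def IsRootIdeal {ℓ : ℕ} (Ψ : Finset (Fin ℓ × Fin ℓ)) : Prop :=
  Ψ ⊆ Dplus ℓ ∧ ∀ p ∈ Ψ, ∀ q ∈ Dplus ℓ, q.1 ≤ p.1 → p.2 ≤ q.2 → q ∈ Ψ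

/-- The Catalan function `H(Ψ;γ) = ∏_{(i,j) ∈ Ψ} (1 - t R_{ij})⁻¹ s_γ`, written out
as the (finitely supported) sum over all ways `n` of applying raising operators
`R_{ij}` with `(i,j) ∈ Ψ`. -/
def catalanFn {ℓ : ℕ} (Ψ : Finset (Fin ℓ × Fin ℓ)) (γ : Fin ℓ → ℤ) : SymF :=
  ∑ᶠ n : Fin ℓ × Fin ℓ → ℕ,
    if ∀ p, p ∉ Ψ → n p = 0 then
      tC ^ (∑ p : Fin ℓ × Fin ℓ, n p) *
        schur (fun a => γ a + ∑ p : Fin ℓ × Fin ℓ,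
          (n p : ℤ) * ((if p.1 = a then 1 else 0) - (if p.2 = a then 1 else 0)))
    else 0

/-- `nr(Ψ)_i`: the number of non-roots of `Ψ` in row `i` (0-based row index,
extended by `0` out of range). -/
def nrN {ℓ : ℕ} (Ψ : Finset (Fin ℓ × Fin ℓ)) (i : ℕ) : ℕ :=
  ((Dplus ℓ \ Ψ).filter fun p => (p.1 : ℕ) = i).card

/-- `μ ∈ Par^k_ℓ`: a partition with at most `ℓ` parts, all of size at most `k`. -/
def IsPartitionK (k : ℕ) {ℓ : ℕ} (μ : Fin ℓ → ℕ) : Prop :=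
  (∀ i j : Fin ℓ, i ≤ j → μ j ≤ μ i) ∧ ∀ i, μ i ≤ k

/-- The root ideal `Δᵏ(μ) = {(i,j) ∈ Δ⁺_ℓ : k - μ_i + i < j}` (1-based), here with
0-based indices. -/
def Dk (k : ℕ) {ℓ : ℕ} (μ : Fin ℓ → ℕ) : Finset (Fin ℓ × Fin ℓ) :=
  (Dplus ℓ).filter fun p => (k : ℤ) - μ p.1 + (p.1 : ℤ) < (p.2 : ℤ)

/-- The `k`-Schur Catalan function `s^{(k)}_μ = H(Δᵏ(μ); μ)`. -/
def kSchur (k : ℕ) {ℓ : ℕ} (μ : Fin ℓ → ℕ) : SymF :=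
  catalanFn (Dk k μ) fun i => (μ i : ℤ)

/-- The modified Hall–Littlewood polynomial `H_μ(x;t) = H(Δ⁺;μ)`. -/
def hallLittlewood {ℓ : ℕ} (μ : Fin ℓ → ℕ) : SymF :=
  catalanFn (Dplus ℓ) fun i => (μ i : ℤ)

/-- `Λᵏ`, the `ℤ[t]`-span of the modified Hall–Littlewood polynomials `H_μ`
for `μ ∈ Par^k`. -/
def LambdaK (k : ℕ) : Submodule CR SymF :=
  Submodule.span CR {f | ∃ (ℓ : ℕ) (μ : Fin ℓ → ℕ),
    IsPartitionK k μ ∧ (∀ i, 0 < μ i) ∧ f = hallLittlewood μ}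

/-- Extend a finite tuple by zeros. -/
def extendFin {ℓ : ℕ} (μ : Fin ℓ → ℕ) : ℕ → ℕ := fun i => if h : i < ℓ then μ ⟨i, h⟩ else 0

/-- Extend a finite integer tuple by zeros. -/
def extendFinZ {ℓ : ℕ} (γ : Fin ℓ → ℤ) : ℕ → ℤ := fun i => if h : i < ℓ then γ ⟨i, h⟩ else 0

/-- `style(Ψ,γ)_i = nr(Ψ)_i + γ_i` (0-based row index `i`). -/
def styleZN {ℓ : ℕ} (Ψ : Finset (Fin ℓ × Fin ℓ)) (γ : Fin ℓ → ℤ) (i : ℕ) : ℤ :=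
  (nrN Ψ i : ℤ) + extendFinZ γ i


section Operators

/-- The generating series `∑_j (h_j^⊥ f) u^j` of the skewing operators `h_j^⊥`
(the adjoints of multiplication by `h_j` for the Hall inner product), as the
`ℤ[t]`-algebra map determined by `h_n ↦ ∑_{j=0}^{n} h_{n-j} u^j`. -/
def hPerpSeries : SymF →ₐ[CR] Polynomial SymF :=
  MvPolynomial.aeval fun n : ℕ =>
    ∑ j ∈ Finset.range (n + 2), Polynomial.C (hh ((n : ℤ) + 1 - j)) * Polynomial.X ^ j

/-- The skewing operator `h_j^⊥`. -/
def hPerp (j : ℕ) (f : SymF) : SymF := (hPerpSeries f).coeff j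

/-- The generating series `∑_i (e_i^⊥ f) u^i` of the skewing operators `e_i^⊥`
(the adjoints of multiplication by the elementary symmetric functions `e_i`),
as the `ℤ[t]`-algebra map determined by `h_n ↦ h_n + h_{n-1} u`. -/
def ePerpSeries : SymF →ₐ[CR] Polynomial SymF :=
  MvPolynomial.aeval fun n : ℕ =>
    Polynomial.C (hh ((n : ℤ) + 1)) + Polynomial.C (hh (n : ℤ)) * Polynomial.X

/-- The skewing operator `e_i^⊥`. -/
def ePerp (i : ℕ) (f : SymF) : SymF := (ePerpSeries f).coeff i

/-- The Garsia–Jing vertex operator `B_m = ∑_{i,j ≥ 0} (-1)^i t^j h_{m+i+j} e_i^⊥ h_j^⊥`. -/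
def GJ (m : ℤ) (f : SymF) : SymF :=
  ∑ᶠ (i : ℕ) (j : ℕ), (-1 : SymF) ^ i * tC ^ j * hh (m + i + j) * ePerp i (hPerp j f)

/-- `B̃_γ = B_{γ_1} B_{γ_2} ⋯ B_{γ_ℓ}` (composition of Garsia–Jing operators). -/
def GJt {ℓ : ℕ} (γ : Fin ℓ → ℤ) (f : SymF) : SymF := (List.ofFn γ).foldr GJ f

/-- The Catalan operator `H^Ψ_γ = ∏_{(i,j) ∈ Δ⁺_ℓ \ Ψ} (1 - t 𝐑_{ij}) B̃_γ`,
expanded as a finite signed sum over subsets of `Δ⁺_ℓ \ Ψ`. -/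
def catalanOp {ℓ : ℕ} (Ψ : Finset (Fin ℓ × Fin ℓ)) (γ : Fin ℓ → ℤ) (f : SymF) : SymF :=
  ∑ S ∈ (Dplus ℓ \ Ψ).powerset, (-1 : SymF) ^ S.card * tC ^ S.card *
    GJt (fun a => γ a + ∑ p ∈ S,
      ((if p.1 = a then 1 else 0) - (if p.2 = a then (1 : ℤ) else 0))) f

/-- The generalized Hall–Littlewood vertex operator
`B_γ = ∏_{(i,j) ∈ Δ⁺_ℓ} (1 - t 𝐑_{ij}) B̃_γ = H^∅_γ`. -/
def vertexB {ℓ : ℕ} (γ : Fin ℓ → ℤ) : SymF → SymF :=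
  catalanOp (∅ : Finset (Fin ℓ × Fin ℓ)) γ

/-- The root ideal `Ψ ⊎ Φ ⊆ Δ⁺_{r+m}`, determined by
`Δ⁺_{r+m} \ (Ψ ⊎ Φ) = (Δ⁺_r \ Ψ) ⊔ {(i+r, j+r) : (i,j) ∈ Δ⁺_m \ Φ}`. -/
def uplus {r m : ℕ} (Ψ : Finset (Fin r × Fin r)) (Φ : Finset (Fin m × Fin m)) :
    Finset (Fin (r + m) × Fin (r + m)) :=
  (Dplus (r + m)).filter fun p =>
    ¬((∃ q : Fin r × Fin r, q ∉ Ψ ∧ q.1 < q.2 ∧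
          (p.1 : ℕ) = (q.1 : ℕ) ∧ (p.2 : ℕ) = (q.2 : ℕ)) ∨
      (∃ q : Fin m × Fin m, q ∉ Φ ∧ q.1 < q.2 ∧
          (p.1 : ℕ) = (q.1 : ℕ) + r ∧ (p.2 : ℕ) = (q.2 : ℕ) + r))

/-- `Λ_ℤ = ℤ[h₁,h₂,…] = Λ/(t-1)`. -/
abbrev SymFZ : Type := MvPolynomial ℕ ℤ

/-- The specialization `t = 1`, i.e. the canonical projection `Λ → Λ/(t-1) = Λ_ℤ`. -/
def specT1 : SymF →+* SymFZ := MvPolynomial.map (Polynomial.evalRingHom 1)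

end Operators


section AuxProof

open Finset Polynomial

/-! ### Basic facts about `specT1`, `hh` -/

lemma specT1_tC : specT1 tC = 1 := by
  simp [specT1, tC]

/-- `h_d` in `Λ_ℤ`. -/
def hz (d : ℤ) : SymFZ :=
  if d < 0 then 0 else if d = 0 then 1 else MvPolynomial.X (d.toNat - 1)

lemma specT1_hh (d : ℤ) : specT1 (hh d) = hz d := by
  unfold hh hz
  by_cases h1 : d < 0
  · rw [if_pos h1, if_pos h1, map_zero]
  · rw [if_neg h1, if_neg h1]
    by_cases h2 : d = 0
    · rw [if_pos h2, if_pos h2, map_one]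
    · rw [if_neg h2, if_neg h2]
      simp [specT1]

def hprod {ℓ : ℕ} (γ : Fin ℓ → ℤ) : SymF := ∏ a, hh (γ a)

def hprodZ {ℓ : ℕ} (γ : Fin ℓ → ℤ) : SymFZ := ∏ a, hz (γ a)

lemma specT1_hprod {ℓ : ℕ} (γ : Fin ℓ → ℤ) : specT1 (hprod γ) = hprodZ γ := by
  unfold hprod hprodZ
  rw [map_prod]
  exact Finset.prod_congr rfl fun a _ => specT1_hh _

lemma hh_natCast (n : ℕ) : hh ((n : ℤ) + 1) = MvPolynomial.X n := by
  unfold hh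
  rw [if_neg (by omega), if_neg (by omega), show ((n : ℤ) + 1).toNat - 1 = n by omega]

/-! ### The composed series `Ē(u) ∘ H(u)` is trivial -/

/-- `Ē(u)`, the `e`-perp series with `u ↦ -u`. -/
def Eneg : SymF →+* Polynomial SymF :=
  (Polynomial.eval₂RingHom Polynomial.C (-Polynomial.X)).comp ePerpSeries.toRingHom

lemma coeff_eval₂negX (q : Polynomial SymF) (i : ℕ) :
    (Polynomial.eval₂ Polynomial.C (-Polynomial.X) q).coeff i = (-1) ^ i * q.coeff i := by
  rw [Polynomial.eval₂_eq_sum_range' (n := q.natDegree + i + 1) _ (by omega)]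
  rw [Polynomial.finset_sum_coeff]
  have : ∀ k, (Polynomial.C (q.coeff k) * (-Polynomial.X : Polynomial SymF) ^ k).coeff i
      = if k = i then (-1) ^ k * q.coeff k else 0 := by
    intro k
    have hnx : (-Polynomial.X : Polynomial SymF) ^ k
        = Polynomial.C ((-1 : SymF) ^ k) * Polynomial.X ^ k := by
      rw [show (-Polynomial.X : Polynomial SymF) = Polynomial.C (-1 : SymF) * Polynomial.X by
        rw [map_neg, map_one]; ring, mul_pow, ← map_pow]
    rw [hnx, show Polynomial.C (q.coeff k) * (Polynomial.C ((-1 : SymF) ^ k) * Polynomial.X ^ k)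
        = Polynomial.C ((-1 : SymF) ^ k * q.coeff k) * Polynomial.X ^ k by
          rw [Polynomial.C_mul]; ring]
    rw [Polynomial.C_mul_X_pow_eq_monomial, Polynomial.coeff_monomial]
  rw [Finset.sum_congr rfl fun k _ => this k]
  rw [Finset.sum_ite_eq' (Finset.range (q.natDegree + i + 1)) i
    (fun k => (-1 : SymF) ^ k * q.coeff k)]
  rw [if_pos (by simp)]

lemma coeff_Eneg (g : SymF) (i : ℕ) : (Eneg g).coeff i = (-1) ^ i * ePerp i g := by
  show (Polynomial.eval₂ Polynomial.C (-Polynomial.X) (ePerpSeries g)).coeff i = _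
  rw [coeff_eval₂negX]; rfl

lemma Eneg_hh (d : ℤ) :
    Eneg (hh d) = Polynomial.C (hh d) - Polynomial.C (hh (d - 1)) * Polynomial.X := by
  rcases lt_trichotomy d 0 with h | h | h
  · rw [show hh d = 0 by unfold hh; rw [if_pos h],
      show hh (d - 1) = 0 by unfold hh; rw [if_pos (by omega)], map_zero]
    simp
    ring
  · subst h
    rw [show (0 : ℤ) - 1 = -1 by norm_num,
      show hh (0 : ℤ) = 1 by unfold hh; norm_num,
      show hh (-1 : ℤ) = 0 by unfold hh; norm_num, map_one]
    simp
    ring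
  · obtain ⟨m, rfl⟩ : ∃ m : ℕ, d = (m : ℤ) + 1 := ⟨(d - 1).toNat, by omega⟩
    have e1 : ePerpSeries (hh ((m : ℤ) + 1))
        = Polynomial.C (hh ((m : ℤ) + 1)) + Polynomial.C (hh (m : ℤ)) * Polynomial.X := by
      rw [hh_natCast m]; exact MvPolynomial.aeval_X _ m
    show (Polynomial.eval₂RingHom Polynomial.C (-Polynomial.X)) (ePerpSeries (hh ((m:ℤ)+1))) = _
    rw [e1, map_add, map_mul]
    simp only [Polynomial.coe_eval₂RingHom, Polynomial.eval₂_C, Polynomial.eval₂_X]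
    rw [show (m : ℤ) + 1 - 1 = (m : ℤ) by ring]
    ring

lemma coeff_eval₂X (φ : SymF →+* Polynomial SymF) (p : Polynomial SymF) (n : ℕ) :
    (Polynomial.eval₂ φ Polynomial.X p).coeff n
      = ∑ j ∈ Finset.range (n + 1), (φ (p.coeff j)).coeff (n - j) := by
  rw [Polynomial.eval₂_eq_sum_range' (n := p.natDegree + n + 1) _ (by omega)]
  rw [Polynomial.finset_sum_coeff]
  have h1 : ∀ k, (φ (p.coeff k) * Polynomial.X ^ k).coeff n
      = if k ≤ n then (φ (p.coeff k)).coeff (n - k) else 0 := by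
    intro k
    rw [Polynomial.coeff_mul_X_pow']
  rw [Finset.sum_congr rfl fun k _ => h1 k]
  rw [← Finset.sum_subset (Finset.range_subset_range.2 (by omega : n + 1 ≤ p.natDegree + n + 1))
    (fun k _ hk => if_neg (by simp at hk; omega))]
  exact Finset.sum_congr rfl fun k hk => if_pos (by simp at hk; omega)

lemma Cmap_eq :
    (Polynomial.eval₂RingHom Eneg Polynomial.X).comp
        (hPerpSeries.toRingHom : SymF →+* Polynomial SymF)
      = (Polynomial.C : SymF →+* Polynomial SymF) := by
  have hC : ∀ r : CR, hPerpSeries (MvPolynomial.C r) = Polynomial.C (MvPolynomial.C r) := by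
    intro r
    have h := hPerpSeries.commutes r
    rw [show (algebraMap CR SymF) r = MvPolynomial.C r from rfl] at h
    rw [h, Polynomial.algebraMap_apply, show (algebraMap CR SymF) r = MvPolynomial.C r from rfl]
  have hCe : ∀ r : CR, ePerpSeries (MvPolynomial.C r) = Polynomial.C (MvPolynomial.C r) := by
    intro r
    have h := ePerpSeries.commutes r
    rw [show (algebraMap CR SymF) r = MvPolynomial.C r from rfl] at h
    rw [h, Polynomial.algebraMap_apply, show (algebraMap CR SymF) r = MvPolynomial.C r from rfl]
  apply MvPolynomial.ringHom_ext
  · intro r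
    simp only [RingHom.comp_apply, AlgHom.toRingHom_eq_coe, RingHom.coe_coe]
    rw [hC r]
    simp only [Polynomial.coe_eval₂RingHom, Polynomial.eval₂_C]
    show (Polynomial.eval₂RingHom Polynomial.C (-Polynomial.X)) (ePerpSeries (MvPolynomial.C r)) = _
    rw [hCe r]
    simp only [Polynomial.coe_eval₂RingHom, Polynomial.eval₂_C]
  · intro n
    simp only [RingHom.comp_apply, AlgHom.toRingHom_eq_coe, RingHom.coe_coe]
    rw [show hPerpSeries (MvPolynomial.X n)
        = ∑ j ∈ Finset.range (n + 2),
            Polynomial.C (hh ((n : ℤ) + 1 - j)) * Polynomial.X ^ j from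
      MvPolynomial.aeval_X _ n]
    rw [map_sum]
    have h1 : ∀ j ∈ Finset.range (n + 2),
        (Polynomial.eval₂RingHom Eneg Polynomial.X)
            (Polynomial.C (hh ((n : ℤ) + 1 - j)) * Polynomial.X ^ j)
          = (Polynomial.C (hh ((n : ℤ) + 1 - (j : ℕ))) * Polynomial.X ^ j
              - Polynomial.C (hh ((n : ℤ) + 1 - ((j + 1 : ℕ) : ℤ))) * Polynomial.X ^ (j + 1)) := by
      intro j _
      rw [map_mul, map_pow]
      simp only [Polynomial.coe_eval₂RingHom, Polynomial.eval₂_C, Polynomial.eval₂_X]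
      rw [Eneg_hh]
      rw [show (n : ℤ) + 1 - (j : ℕ) - 1 = (n : ℤ) + 1 - ((j + 1 : ℕ) : ℤ) by push_cast; ring]
      ring
    rw [Finset.sum_congr rfl h1]
    have tele : ∑ j ∈ Finset.range (n + 2),
        (Polynomial.C (hh ((n : ℤ) + 1 - (j : ℕ))) * Polynomial.X ^ j
          - Polynomial.C (hh ((n : ℤ) + 1 - ((j + 1 : ℕ) : ℤ))) * Polynomial.X ^ (j + 1))
        = Polynomial.C (hh ((n : ℤ) + 1 - ((0 : ℕ) : ℤ))) * Polynomial.X ^ 0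
          - Polynomial.C (hh ((n : ℤ) + 1 - ((n + 2 : ℕ) : ℤ))) * Polynomial.X ^ (n + 2) :=
      Finset.sum_range_sub'
        (fun j : ℕ => Polynomial.C (hh ((n : ℤ) + 1 - (j : ℕ))) * Polynomial.X ^ j) (n + 2)
    rw [tele]
    rw [show hh ((n : ℤ) + 1 - ((n + 2 : ℕ) : ℤ)) = 0 by
      unfold hh; rw [if_pos (by push_cast; omega)]]
    simp [hh_natCast n]
    ring

lemma Cmap_apply (f : SymF) :
    Polynomial.eval₂ Eneg Polynomial.X (hPerpSeries f) = Polynomial.C f := by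
  have := congrArg (fun φ : SymF →+* Polynomial SymF => φ f) Cmap_eq
  simpa using this

lemma sum_ePerp_hPerp (f : SymF) (n : ℕ) :
    ∑ j ∈ Finset.range (n + 1), (-1 : SymF) ^ (n - j) * ePerp (n - j) (hPerp j f)
      = if n = 0 then f else 0 := by
  have h1 : (Polynomial.eval₂ Eneg Polynomial.X (hPerpSeries f)).coeff n
      = (Polynomial.C f).coeff n := by rw [Cmap_apply]
  rw [coeff_eval₂X, Polynomial.coeff_C] at h1
  rw [← h1]
  exact Finset.sum_congr rfl fun j _ => (coeff_Eneg _ _).symm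


/-! ### `B_m` at `t = 1` is multiplication by `h_m` -/

def Jdeg (f : SymF) : ℕ := (hPerpSeries f).natDegree

def Mdeg (f : SymF) : ℕ :=
  max (Jdeg f) ((Finset.range (Jdeg f + 1)).sup fun j => (ePerpSeries (hPerp j f)).natDegree)

lemma eP_hP_vanish (f : SymF) {i j : ℕ} (h : Mdeg f < i ∨ Jdeg f < j) :
    ePerp i (hPerp j f) = 0 := by
  by_cases hj : Jdeg f < j
  · rw [show hPerp j f = 0 from Polynomial.coeff_eq_zero_of_natDegree_lt hj]
    show (ePerpSeries 0).coeff i = 0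
    rw [map_zero, Polynomial.coeff_zero]
  · push_neg at hj
    have h' : Mdeg f < i := by
      rcases h with h' | h'
      · exact h'
      · exact absurd h' (by omega)
    apply Polynomial.coeff_eq_zero_of_natDegree_lt
    calc (ePerpSeries (hPerp j f)).natDegree
        ≤ (Finset.range (Jdeg f + 1)).sup (fun j => (ePerpSeries (hPerp j f)).natDegree) :=
          Finset.le_sup (f := fun k => (ePerpSeries (hPerp k f)).natDegree)
            (Finset.mem_range.mpr (by omega : j < Jdeg f + 1))
      _ ≤ Mdeg f := le_max_right _ _
      _ < i := h'

lemma GJ_eq_sum (m : ℤ) (f : SymF) :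
    GJ m f = ∑ q ∈ Finset.range (Mdeg f + 1) ×ˢ Finset.range (Mdeg f + 1),
      (-1 : SymF) ^ q.1 * tC ^ q.2 * hh (m + q.1 + q.2) * ePerp q.1 (hPerp q.2 f) := by
  unfold GJ
  have hJM : Jdeg f ≤ Mdeg f := le_max_left _ _
  have inner : ∀ i : ℕ,
      (∑ᶠ j : ℕ, (-1 : SymF) ^ i * tC ^ j * hh (m + i + j) * ePerp i (hPerp j f))
      = ∑ j ∈ Finset.range (Mdeg f + 1),
          (-1 : SymF) ^ i * tC ^ j * hh (m + i + j) * ePerp i (hPerp j f) := by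
    intro i
    apply finsum_eq_sum_of_support_subset
    intro j hj
    simp only [Function.mem_support] at hj
    rw [Finset.coe_range]
    by_contra hmem
    simp only [Set.mem_Iio, not_lt] at hmem
    apply hj
    rw [eP_hP_vanish f (Or.inr (by omega : Jdeg f < j))]
    ring
  rw [finsum_congr inner]
  rw [finsum_eq_sum_of_support_subset _ (s := Finset.range (Mdeg f + 1)) (by
    intro i hi
    simp only [Function.mem_support] at hi
    rw [Finset.coe_range]
    by_contra hmem
    simp only [Set.mem_Iio, not_lt] at hmem
    apply hi
    apply Finset.sum_eq_zero
    intro j _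
    rw [eP_hP_vanish f (Or.inl (by omega : Mdeg f < i))]
    ring)]
  rw [Finset.sum_product]

lemma rect_sum (f : SymF) (m : ℤ) :
    ∑ q ∈ Finset.range (Mdeg f + 1) ×ˢ Finset.range (Mdeg f + 1),
      (-1 : SymF) ^ q.1 * hh (m + q.1 + q.2) * ePerp q.1 (hPerp q.2 f) = hh m * f := by
  set M := Mdeg f with hM
  rw [← Finset.sum_fiberwise_of_maps_to (g := fun q : ℕ × ℕ => q.1 + q.2)
    (t := Finset.range (2 * M + 1)) (fun q hq => by
      simp only [Finset.mem_product, Finset.mem_range] at hq ⊢; omega)]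
  have fib : ∀ n ∈ Finset.range (2 * M + 1),
      (∑ q ∈ (Finset.range (M+1) ×ˢ Finset.range (M+1)).filter (fun q => q.1 + q.2 = n),
        (-1 : SymF) ^ q.1 * hh (m + q.1 + q.2) * ePerp q.1 (hPerp q.2 f))
      = hh (m + n) * (if n = 0 then f else 0) := by
    intro n _
    have step1 : ∀ q ∈ (Finset.range (M+1) ×ˢ Finset.range (M+1)).filter
        (fun q => q.1 + q.2 = n),
        (-1 : SymF) ^ q.1 * hh (m + q.1 + q.2) * ePerp q.1 (hPerp q.2 f)
        = hh (m + n) * ((-1 : SymF) ^ q.1 * ePerp q.1 (hPerp q.2 f)) := by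
      intro q hq
      simp only [Finset.mem_filter] at hq
      rw [show (m + (q.1 : ℤ) + (q.2 : ℤ)) = m + (n : ℤ) by rw [← hq.2]; push_cast; ring]
      ring
    rw [Finset.sum_congr rfl step1, ← Finset.mul_sum]
    congr 1
    have hsub : (Finset.range (M+1) ×ˢ Finset.range (M+1)).filter (fun q => q.1 + q.2 = n)
        ⊆ (Finset.range (M+n+1) ×ˢ Finset.range (M+n+1)).filter (fun q => q.1 + q.2 = n) := by
      intro q hq
      simp only [Finset.mem_filter, Finset.mem_product, Finset.mem_range] at hq ⊢
      omega
    rw [Finset.sum_subset hsub (fun q hq hq2 => by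
      simp only [Finset.mem_filter, Finset.mem_product, Finset.mem_range] at hq hq2
      have hv : M < q.1 ∨ Jdeg f < q.2 := by
        have hJM : Jdeg f ≤ M := le_max_left _ _
        omega
      rw [eP_hP_vanish f hv]
      ring)]
    rw [← sum_ePerp_hPerp f n]
    apply Finset.sum_nbij' (i := fun q : ℕ × ℕ => q.2) (j := fun j => (n - j, j))
    · intro q hq
      simp only [Finset.mem_filter, Finset.mem_product, Finset.mem_range] at hq ⊢
      omega
    · intro j hj
      simp only [Finset.mem_filter, Finset.mem_product, Finset.mem_range] at hj ⊢
      omega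
    · intro q hq
      simp only [Finset.mem_filter, Finset.mem_product, Finset.mem_range] at hq
      ext <;> simp <;> omega
    · intro j _
      rfl
    · intro q hq
      simp only [Finset.mem_filter, Finset.mem_product, Finset.mem_range] at hq
      have : q.1 = n - q.2 := by omega
      rw [this]
  rw [Finset.sum_congr rfl fib]
  rw [Finset.sum_eq_single_of_mem 0 (Finset.mem_range.mpr (by omega))
    (fun n _ hn => by rw [if_neg hn, mul_zero])]
  simp

lemma GJ_spec (m : ℤ) (f : SymF) : specT1 (GJ m f) = specT1 (hh m * f) := by
  rw [GJ_eq_sum, ← rect_sum f m, map_sum, map_sum]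
  apply Finset.sum_congr rfl
  intro q _
  simp [map_mul, map_pow, specT1_tC]

lemma foldr_spec (L : List ℤ) (f : SymF) :
    specT1 (L.foldr GJ f) = specT1 ((L.map hh).prod) * specT1 f := by
  induction L generalizing f with
  | nil => simp
  | cons a L ih =>
    simp only [List.foldr_cons, List.map_cons, List.prod_cons]
    rw [GJ_spec, map_mul, ih, map_mul]
    ring

lemma GJt_spec {ℓ : ℕ} (γ : Fin ℓ → ℤ) (f : SymF) :
    specT1 (GJt γ f) = specT1 (hprod γ) * specT1 f := by
  unfold GJt
  rw [foldr_spec]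
  congr 2
  rw [List.map_ofFn, List.prod_ofFn]
  rfl

/-! ### The Catalan operator at `t = 1` -/

def eps {ℓ : ℕ} (S : Finset (Fin ℓ × Fin ℓ)) (a : Fin ℓ) : ℤ :=
  ∑ p ∈ S, ((if p.1 = a then 1 else 0) - (if p.2 = a then 1 else 0))

lemma catalanOp_spec {ℓ : ℕ} (Ψ : Finset (Fin ℓ × Fin ℓ)) (μ : Fin ℓ → ℤ) (f : SymF) :
    specT1 (catalanOp Ψ μ f)
      = (∑ S ∈ (Dplus ℓ \ Ψ).powerset,
          (-1 : SymFZ) ^ S.card * specT1 (hprod fun a => μ a + eps S a)) * specT1 f := by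
  unfold catalanOp
  rw [map_sum, Finset.sum_mul]
  apply Finset.sum_congr rfl
  intro S _
  rw [show (fun a => μ a + eps S a)
      = (fun a => μ a + ∑ p ∈ S,
          ((if p.1 = a then 1 else 0) - (if p.2 = a then (1 : ℤ) else 0))) from rfl]
  rw [map_mul, map_mul, map_pow, map_pow, specT1_tC, one_pow, mul_one, GJt_spec]
  rw [map_neg, map_one]
  ring


/-! ### Group algebra of `ℤ^ℓ` and the raising-operator expansion of Schur functions -/

abbrev GA (ℓ : ℕ) : Type := AddMonoidAlgebra ℤ (Fin ℓ → ℤ)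

def delta {ℓ : ℕ} (i : Fin ℓ) : Fin ℓ → ℤ := fun a => if i = a then 1 else 0

def epsvec {ℓ : ℕ} (p : Fin ℓ × Fin ℓ) : Fin ℓ → ℤ :=
  fun a => (if p.1 = a then 1 else 0) - (if p.2 = a then 1 else 0)

lemma eps_eq_sum_epsvec {ℓ : ℕ} (S : Finset (Fin ℓ × Fin ℓ)) (a : Fin ℓ) :
    (∑ p ∈ S, epsvec p) a = eps S a := by
  rw [Finset.sum_apply]
  rfl

def Theta {ℓ : ℕ} (γ : Fin ℓ → ℤ) : GA ℓ →+ SymFZ :=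
  (Finsupp.liftAddHom fun (v : Fin ℓ → ℤ) => zmultiplesHom SymFZ (hprodZ fun a => γ a + v a)).comp
    AddMonoidAlgebra.coeffAddEquiv.toAddMonoidHom

lemma Theta_single {ℓ : ℕ} (γ : Fin ℓ → ℤ) (v : Fin ℓ → ℤ) (c : ℤ) :
    Theta γ (AddMonoidAlgebra.single v c) = c • hprodZ (fun a => γ a + v a) := by
  unfold Theta
  rw [AddMonoidHom.comp_apply]
  show Finsupp.liftAddHom _ (AddMonoidAlgebra.coeff (AddMonoidAlgebra.single v c)) = _
  rw [AddMonoidAlgebra.coeff_single]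
  exact Finsupp.liftAddHom_apply_single _ _ _

lemma prod_Dplus {ℓ : ℕ} {M : Type*} [CommMonoid M] (f : Fin ℓ × Fin ℓ → M) :
    ∏ p ∈ Dplus ℓ, f p = ∏ i : Fin ℓ, ∏ j ∈ Finset.Ioi i, f (i, j) := by
  rw [Dplus, Finset.prod_filter, Fintype.prod_prod_type]
  apply Finset.prod_congr rfl
  intro i _
  rw [← Finset.filter_lt_eq_Ioi, Finset.prod_filter]

lemma card_Dplus_snd {ℓ : ℕ} (a : Fin ℓ) :
    ((Dplus ℓ).filter fun p => p.2 = a).card = (a : ℕ) := by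
  rw [← Fin.card_Iio a]
  apply Finset.card_nbij' (i := fun p => p.1) (j := fun i => (i, a))
  · intro p hp
    simp only [Finset.mem_coe, Dplus, Finset.mem_filter, Finset.mem_univ, true_and] at hp
    simp only [Finset.mem_coe, Finset.mem_Iio]
    rw [← hp.2]
    exact hp.1
  · intro i hi
    simp only [Finset.mem_coe, Finset.mem_Iio] at hi
    simp only [Finset.mem_coe, Dplus, Finset.mem_filter, Finset.mem_univ, true_and]
    exact ⟨hi, trivial⟩
  · intro p hp
    simp only [Finset.mem_coe, Dplus, Finset.mem_filter, Finset.mem_univ, true_and] at hp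
    rw [← hp.2]
  · intro i _
    rfl

lemma sum_delta_snd {ℓ : ℕ} (a : Fin ℓ) :
    (∑ p ∈ Dplus ℓ, delta p.2 a) = (a : ℤ) := by
  unfold delta
  have h : ∀ p ∈ Dplus ℓ, (if p.2 = a then (1:ℤ) else 0) = if (fun p : Fin ℓ × Fin ℓ => p.2 = a) p then (1:ℤ) else 0 := fun p _ => rfl
  rw [Finset.sum_congr rfl h, Finset.sum_boole, card_Dplus_snd]

lemma ga_main (ℓ : ℕ) :
    ∏ p ∈ Dplus ℓ, ((1 : GA ℓ) - AddMonoidAlgebra.single (epsvec p) 1)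
      = ∑ σ : Equiv.Perm (Fin ℓ), (Equiv.Perm.sign σ : ℤ) •
          AddMonoidAlgebra.single (fun a => ((σ⁻¹ a : Fin ℓ) : ℤ) - (a : ℤ)) (1 : ℤ) := by
  classical
  have hfac : ∀ p ∈ Dplus ℓ, ((1 : GA ℓ) - AddMonoidAlgebra.single (epsvec p) 1)
      = AddMonoidAlgebra.single (-(delta p.2)) 1 *
          (AddMonoidAlgebra.single (delta p.2) 1 - AddMonoidAlgebra.single (delta p.1) 1) := by
    intro p _
    have h0 : (-(delta p.2) + delta p.2) = (0 : Fin ℓ → ℤ) := by funext a; simp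
    have h1 : (-(delta p.2) + delta p.1) = epsvec p := by
      funext a
      simp only [Pi.add_apply, Pi.neg_apply]
      unfold delta epsvec
      ring
    rw [mul_sub, AddMonoidAlgebra.single_mul_single, AddMonoidAlgebra.single_mul_single,
      one_mul, h0, h1, ← AddMonoidAlgebra.one_def]
  rw [Finset.prod_congr rfl hfac, Finset.prod_mul_distrib, AddMonoidAlgebra.prod_single,
    Finset.prod_const_one]
  have hrho : (∑ p ∈ Dplus ℓ, -(delta p.2)) = fun a : Fin ℓ => -(a : ℤ) := by
    funext a
    rw [Finset.sum_apply]
    have : ∀ p ∈ Dplus ℓ, (-(delta p.2)) a = -(delta p.2 a) := fun p _ => rfl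
    rw [Finset.sum_congr rfl this, Finset.sum_neg_distrib, sum_delta_snd]
  rw [hrho]
  have hvdm : ∏ p ∈ Dplus ℓ,
      (AddMonoidAlgebra.single (delta p.2) (1:ℤ) - AddMonoidAlgebra.single (delta p.1) 1)
      = ∑ σ : Equiv.Perm (Fin ℓ), Equiv.Perm.sign σ •
          AddMonoidAlgebra.single (∑ i : Fin ℓ, (i : ℕ) • delta (σ i)) (1:ℤ) := by
    rw [prod_Dplus (fun p => AddMonoidAlgebra.single (delta p.2) (1:ℤ)
      - AddMonoidAlgebra.single (delta p.1) 1)]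
    rw [← Matrix.det_vandermonde (fun i : Fin ℓ => AddMonoidAlgebra.single (delta i) (1:ℤ))]
    rw [Matrix.det_apply]
    apply Finset.sum_congr rfl
    intro σ _
    congr 1
    have : ∀ i : Fin ℓ, Matrix.vandermonde
          (fun i : Fin ℓ => AddMonoidAlgebra.single (delta i) (1:ℤ)) (σ i) i
        = AddMonoidAlgebra.single ((i : ℕ) • delta (σ i)) (1:ℤ) := by
      intro i
      rw [Matrix.vandermonde_apply, AddMonoidAlgebra.single_pow, one_pow]
    rw [Finset.prod_congr rfl (fun i _ => this i), AddMonoidAlgebra.prod_single,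
      Finset.prod_const_one]
  rw [hvdm, Finset.mul_sum]
  apply Finset.sum_congr rfl
  intro σ _
  rw [mul_smul_comm, AddMonoidAlgebra.single_mul_single, one_mul]
  have hexp : ((fun a : Fin ℓ => -(a : ℤ)) + ∑ i : Fin ℓ, (i : ℕ) • delta (σ i))
      = fun a => ((σ⁻¹ a : Fin ℓ) : ℤ) - (a : ℤ) := by
    funext a
    rw [Pi.add_apply, Finset.sum_apply]
    have h2 : ∀ i : Fin ℓ, ((i : ℕ) • delta (σ i)) a = if σ i = a then (i : ℤ) else 0 := by
      intro i
      rw [Pi.smul_apply]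
      unfold delta
      split_ifs <;> simp
    rw [Finset.sum_congr rfl (fun i _ => h2 i)]
    rw [Finset.sum_eq_single (σ⁻¹ a)
      (fun i _ hne => if_neg (fun h => hne (by rw [← h, Equiv.Perm.inv_def, Equiv.symm_apply_apply])))
      (fun h => absurd (Finset.mem_univ _) h)]
    rw [if_pos (show σ (σ⁻¹ a) = a from σ.apply_symm_apply a)]
    ring
  rw [hexp]
  rw [show ∀ u : ℤˣ, ∀ x : GA ℓ, u • x = (u : ℤ) • x from fun u x => Units.smul_def u x]

lemma specT1_schur {ℓ : ℕ} (γ : Fin ℓ → ℤ) :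
    specT1 (schur γ) = (Matrix.of fun i j : Fin ℓ => hz (γ i + (j : ℤ) - (i : ℤ))).det := by
  unfold schur
  rw [RingHom.map_det]
  congr 1
  ext i j
  simp [Matrix.map_apply, specT1_hh]

lemma schurZ_expand {ℓ : ℕ} (γ : Fin ℓ → ℤ) :
    specT1 (schur γ)
      = ∑ S ∈ (Dplus ℓ).powerset, (-1 : SymFZ) ^ S.card * hprodZ (fun a => γ a + eps S a) := by
  classical
  have expand : ∏ p ∈ Dplus ℓ, ((1 : GA ℓ) - AddMonoidAlgebra.single (epsvec p) 1)
      = ∑ S ∈ (Dplus ℓ).powerset,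
          AddMonoidAlgebra.single (∑ p ∈ S, epsvec p) ((-1) ^ S.card) := by
    have h1 : ∀ p ∈ Dplus ℓ, ((1 : GA ℓ) - AddMonoidAlgebra.single (epsvec p) 1)
        = AddMonoidAlgebra.single (epsvec p) (-1 : ℤ) + 1 := by
      intro p _
      rw [show AddMonoidAlgebra.single (epsvec p) (-1 : ℤ)
          = -AddMonoidAlgebra.single (epsvec p) (1 : ℤ) from AddMonoidAlgebra.single_neg _ _]
      ring
    rw [Finset.prod_congr rfl h1, Finset.prod_add]
    apply Finset.sum_congr rfl
    intro S _
    rw [Finset.prod_const_one, mul_one, AddMonoidAlgebra.prod_single, Finset.prod_const]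
  have key := congrArg (Theta γ) (ga_main ℓ)
  rw [expand, map_sum, map_sum] at key
  have L : ∀ S ∈ (Dplus ℓ).powerset,
      Theta γ (AddMonoidAlgebra.single (∑ p ∈ S, epsvec p) ((-1) ^ S.card))
        = (-1 : SymFZ) ^ S.card * hprodZ (fun a => γ a + eps S a) := by
    intro S _
    rw [Theta_single]
    have : (fun a => γ a + (∑ p ∈ S, epsvec p) a) = fun a => γ a + eps S a := by
      funext a; rw [eps_eq_sum_epsvec]
    rw [this, zsmul_eq_mul]
    push_cast
    ring
  have R : ∀ σ : Equiv.Perm (Fin ℓ),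
      Theta γ ((Equiv.Perm.sign σ : ℤ) •
          AddMonoidAlgebra.single (fun a => ((σ⁻¹ a : Fin ℓ) : ℤ) - (a : ℤ)) (1 : ℤ))
        = Equiv.Perm.sign σ •
            ∏ i : Fin ℓ, hz (γ (σ i) + (i : ℤ) - (σ i : ℤ)) := by
    intro σ
    rw [map_zsmul, Theta_single, one_smul]
    rw [show ∀ u : ℤˣ, ∀ x : SymFZ, u • x = (u : ℤ) • x from fun u x => Units.smul_def u x]
    congr 1
    unfold hprodZ
    rw [← Equiv.prod_comp σ (fun a => hz (γ a + (((σ⁻¹ a : Fin ℓ) : ℤ) - (a : ℤ))))]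
    apply Finset.prod_congr rfl
    intro i _
    rw [Equiv.Perm.inv_def, Equiv.symm_apply_apply]
    ring_nf
  rw [Finset.sum_congr rfl L, Finset.sum_congr rfl (fun σ _ => R σ)] at key
  rw [specT1_schur, Matrix.det_apply, key]
  rfl


/-! ### Bounds and the finite-support reduction -/

def wfv {ℓ : ℕ} (n : Fin ℓ × Fin ℓ → ℕ) (a : Fin ℓ) : ℤ :=
  ∑ p : Fin ℓ × Fin ℓ, (n p : ℤ) * ((if p.1 = a then 1 else 0) - (if p.2 = a then 1 else 0))

lemma wfv_add {ℓ : ℕ} (n m : Fin ℓ × Fin ℓ → ℕ) (a : Fin ℓ) :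
    wfv (fun p => n p + m p) a = wfv n a + wfv m a := by
  unfold wfv
  rw [← Finset.sum_add_distrib]
  apply Finset.sum_congr rfl
  intro p _
  push_cast
  ring

lemma wfv_zero {ℓ : ℕ} (a : Fin ℓ) : wfv (fun _ => 0) a = 0 := by
  unfold wfv; simp

lemma wfv_indicator {ℓ : ℕ} (T : Finset (Fin ℓ × Fin ℓ)) (a : Fin ℓ) :
    wfv (fun p => if p ∈ T then 1 else 0) a = eps T a := by
  unfold wfv eps
  trans (∑ p : Fin ℓ × Fin ℓ,
      if p ∈ T then ((if p.1 = a then 1 else 0) - (if p.2 = a then (1:ℤ) else 0)) else 0)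
  · apply Finset.sum_congr rfl
    intro p _
    by_cases hp : p ∈ T
    · simp [hp]
    · simp [hp]
  · rw [Finset.sum_ite_mem, Finset.univ_inter]

lemma np_le_bound {ℓ : ℕ} (n : Fin ℓ × Fin ℓ → ℕ)
    (hsupp : ∀ p : Fin ℓ × Fin ℓ, n p ≠ 0 → p.1 < p.2)
    (c : Fin ℓ → ℤ) (hb : ∀ a, -(c a) ≤ wfv n a) (q : Fin ℓ × Fin ℓ) :
    (n q : ℤ) ≤ ∑ a : Fin ℓ, ((a : ℕ) : ℤ) * c a := by
  have h1 : ∑ a : Fin ℓ, ((a : ℕ) : ℤ) * (- wfv n a)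
      = ∑ p : Fin ℓ × Fin ℓ, (n p : ℤ) * (((p.2 : ℕ) : ℤ) - ((p.1 : ℕ) : ℤ)) := by
    have e1 : ∀ a : Fin ℓ, ((a : ℕ) : ℤ) * (- wfv n a)
        = ∑ p : Fin ℓ × Fin ℓ, (n p : ℤ) *
            (((a : ℕ) : ℤ) * ((if p.2 = a then 1 else 0) - (if p.1 = a then 1 else 0))) := by
      intro a
      unfold wfv
      rw [← Finset.sum_neg_distrib, Finset.mul_sum]
      apply Finset.sum_congr rfl
      intro p _
      ring
    rw [Finset.sum_congr rfl (fun a _ => e1 a), Finset.sum_comm]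
    apply Finset.sum_congr rfl
    intro p _
    rw [← Finset.mul_sum]
    congr 1
    have e2 : ∀ a : Fin ℓ,
        ((a : ℕ) : ℤ) * ((if p.2 = a then 1 else 0) - (if p.1 = a then 1 else 0))
        = (if p.2 = a then ((a : ℕ) : ℤ) else 0) - (if p.1 = a then ((a : ℕ) : ℤ) else 0) := by
      intro a
      split_ifs <;> ring
    rw [Finset.sum_congr rfl (fun a _ => e2 a), Finset.sum_sub_distrib,
      Finset.sum_ite_eq Finset.univ p.2 (fun a : Fin ℓ => ((a : ℕ) : ℤ)),
      Finset.sum_ite_eq Finset.univ p.1 (fun a : Fin ℓ => ((a : ℕ) : ℤ)),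
      if_pos (Finset.mem_univ _), if_pos (Finset.mem_univ _)]
  have h2 : (n q : ℤ) ≤ ∑ p : Fin ℓ × Fin ℓ, (n p : ℤ) * (((p.2 : ℕ) : ℤ) - ((p.1 : ℕ) : ℤ)) := by
    calc (n q : ℤ) ≤ ∑ p : Fin ℓ × Fin ℓ, (n p : ℤ) :=
          Finset.single_le_sum (f := fun p : Fin ℓ × Fin ℓ => (n p : ℤ))
            (fun p _ => by positivity) (Finset.mem_univ q)
      _ ≤ _ := by
          apply Finset.sum_le_sum
          intro p _
          by_cases hp : n p = 0
          · rw [hp]; simp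
          · have hlt : (p.1 : ℕ) < (p.2 : ℕ) := hsupp p hp
            have h21 : (1 : ℤ) ≤ ((p.2 : ℕ) : ℤ) - ((p.1 : ℕ) : ℤ) := by omega
            have hnn : (0 : ℤ) ≤ (n p : ℤ) := by positivity
            nlinarith
  have h3 : ∑ a : Fin ℓ, ((a : ℕ) : ℤ) * (- wfv n a) ≤ ∑ a : Fin ℓ, ((a : ℕ) : ℤ) * c a := by
    apply Finset.sum_le_sum
    intro a _
    have hba := hb a
    have hnn : (0 : ℤ) ≤ ((a : ℕ) : ℤ) := by positivity
    nlinarith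
  linarith

def Nb {ℓ : ℕ} (μ : Fin ℓ → ℤ) : ℕ := ∑ a : Fin ℓ, (a : ℕ) * ((μ a).natAbs + ℓ * ℓ + ℓ)

lemma eps_abs_le {ℓ : ℕ} (S : Finset (Fin ℓ × Fin ℓ)) (a : Fin ℓ) :
    eps S a ≤ ((ℓ * ℓ : ℕ) : ℤ) := by
  unfold eps
  calc ∑ p ∈ S, ((if p.1 = a then 1 else 0) - (if p.2 = a then (1:ℤ) else 0))
      ≤ ∑ _p ∈ S, (1 : ℤ) := Finset.sum_le_sum (fun p _ => by split_ifs <;> norm_num)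
    _ = (S.card : ℤ) := by simp
    _ ≤ ((ℓ * ℓ : ℕ) : ℤ) := by
        have h := Finset.card_le_univ S
        have hcard : (Finset.univ : Finset (Fin ℓ × Fin ℓ)).card = ℓ * ℓ := by simp
        rw [← hcard]
        exact_mod_cast h

lemma bound_core {ℓ : ℕ} (μ : Fin ℓ → ℤ) (S : Finset (Fin ℓ × Fin ℓ)) (n : Fin ℓ × Fin ℓ → ℕ)
    (hsupp : ∀ p : Fin ℓ × Fin ℓ, n p ≠ 0 → p.1 < p.2)
    (hb : ∀ a, -(μ a + eps S a + (ℓ : ℤ)) ≤ wfv n a) (q : Fin ℓ × Fin ℓ) : n q ≤ Nb μ := by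
  have h := np_le_bound n hsupp (fun a => μ a + eps S a + (ℓ : ℤ)) hb q
  have h2 : ∑ a : Fin ℓ, ((a : ℕ) : ℤ) * (μ a + eps S a + (ℓ : ℤ)) ≤ (Nb μ : ℤ) := by
    have hNb : (Nb μ : ℤ)
        = ∑ a : Fin ℓ, ((a : ℕ) : ℤ) * (|μ a| + ((ℓ * ℓ : ℕ) : ℤ) + (ℓ : ℤ)) := by
      unfold Nb
      push_cast
      ring
    rw [hNb]
    apply Finset.sum_le_sum
    intro a _
    have h3 : μ a + eps S a + (ℓ : ℤ) ≤ |μ a| + ((ℓ * ℓ : ℕ) : ℤ) + (ℓ : ℤ) := by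
      have h4 := le_abs_self (μ a)
      have h5 := eps_abs_le S a
      linarith
    exact mul_le_mul_of_nonneg_left h3 (by positivity)
  have := le_trans h h2
  exact_mod_cast this

lemma hh_of_neg {d : ℤ} (h : d < 0) : hh d = 0 := by unfold hh; rw [if_pos h]

lemma hz_of_neg {d : ℤ} (h : d < 0) : hz d = 0 := by unfold hz; rw [if_pos h]

lemma hprodZ_ne_zero_imp {ℓ : ℕ} {γ : Fin ℓ → ℤ} (h : hprodZ γ ≠ 0) : ∀ a, 0 ≤ γ a := by
  intro a
  by_contra hneg
  push_neg at hneg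
  apply h
  unfold hprodZ
  exact Finset.prod_eq_zero (Finset.mem_univ a) (hz_of_neg hneg)

lemma schur_ne_zero_imp {ℓ : ℕ} {γ : Fin ℓ → ℤ} (h : schur γ ≠ 0) :
    ∀ a : Fin ℓ, 0 ≤ γ a + (ℓ : ℤ) - 1 - ((a : ℕ) : ℤ) := by
  intro a
  by_contra hneg
  push_neg at hneg
  apply h
  unfold schur
  apply Matrix.det_eq_zero_of_row_eq_zero a
  intro j
  rw [Matrix.of_apply]
  apply hh_of_neg
  have hj : (j : ℕ) < ℓ := j.isLt
  omega

def BoxS {ℓ : ℕ} (Ψ : Finset (Fin ℓ × Fin ℓ)) (N : ℕ) : Finset (Fin ℓ × Fin ℓ → ℕ) :=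
  (Fintype.piFinset fun _ => Finset.range (N + 1)).filter fun n => ∀ p, p ∉ Ψ → n p = 0

lemma mem_BoxS {ℓ : ℕ} {Ψ : Finset (Fin ℓ × Fin ℓ)} {N : ℕ} {n : Fin ℓ × Fin ℓ → ℕ} :
    n ∈ BoxS Ψ N ↔ (∀ p, n p ≤ N) ∧ (∀ p, p ∉ Ψ → n p = 0) := by
  unfold BoxS
  rw [Finset.mem_filter, Fintype.mem_piFinset]
  constructor
  · rintro ⟨h1, h2⟩
    exact ⟨fun p => by have := h1 p; simp only [Finset.mem_range] at this; omega, h2⟩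
  · rintro ⟨h1, h2⟩
    exact ⟨fun p => Finset.mem_range.mpr (by have := h1 p; omega), h2⟩

lemma catalanFn_eq_sum {ℓ : ℕ} (Ψ : Finset (Fin ℓ × Fin ℓ)) (hsub : Ψ ⊆ Dplus ℓ)
    (μ : Fin ℓ → ℤ) :
    catalanFn Ψ μ = ∑ n ∈ BoxS Ψ (Nb μ),
      tC ^ (∑ p, n p) * schur (fun a => μ a + wfv n a) := by
  unfold catalanFn
  rw [finsum_eq_sum_of_support_subset _ (s := BoxS Ψ (Nb μ)) ?hs]
  · apply Finset.sum_congr rfl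
    intro n hn
    rw [if_pos ((Finset.mem_filter.mp hn).2)]
    rfl
  case hs =>
    intro n hn
    simp only [Function.mem_support] at hn
    have hcond : ∀ p, p ∉ Ψ → n p = 0 := by
      by_contra hc
      exact hn (if_neg hc)
    rw [if_pos hcond] at hn
    have hschur : schur (fun a => μ a + wfv n a) ≠ 0 := right_ne_zero_of_mul hn
    have hsupp : ∀ p : Fin ℓ × Fin ℓ, n p ≠ 0 → p.1 < p.2 := by
      intro p hp
      have hmem : p ∈ Ψ := by
        by_contra hq
        exact hp (hcond p hq)
      have := hsub hmem
      simpa [Dplus] using this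
    have hb : ∀ a, -(μ a + eps (∅ : Finset (Fin ℓ × Fin ℓ)) a + (ℓ : ℤ)) ≤ wfv n a := by
      intro a
      have h0 : (0:ℤ) ≤ μ a + wfv n a + (ℓ : ℤ) - 1 - ((a : ℕ) : ℤ) := schur_ne_zero_imp hschur a
      have heps : eps (∅ : Finset (Fin ℓ × Fin ℓ)) a = 0 := by simp [eps]
      rw [heps]
      have ha : (0:ℤ) ≤ ((a:ℕ):ℤ) := by positivity
      linarith
    have hbox : ∀ p, n p ≤ Nb μ := fun p => bound_core μ ∅ n hsupp hb p
    rw [Finset.mem_coe, mem_BoxS]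
    exact ⟨hbox, hcond⟩

lemma specT1_catalanFn {ℓ : ℕ} (Ψ : Finset (Fin ℓ × Fin ℓ)) (hsub : Ψ ⊆ Dplus ℓ)
    (μ : Fin ℓ → ℤ) :
    specT1 (catalanFn Ψ μ)
      = ∑ n ∈ BoxS Ψ (Nb μ), specT1 (schur (fun a => μ a + wfv n a)) := by
  rw [catalanFn_eq_sum Ψ hsub μ, map_sum]
  apply Finset.sum_congr rfl
  intro n _
  rw [map_mul, map_pow, specT1_tC, one_pow, one_mul]

/-! ### Splitting powersets and the inclusion–exclusion collapse -/

lemma powerset_split {α : Type*} [DecidableEq α] {A B : Finset α} (hd : Disjoint A B)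
    {M : Type*} [AddCommMonoid M] (f : Finset α → M) :
    ∑ S ∈ (A ∪ B).powerset, f S = ∑ T ∈ A.powerset, ∑ S' ∈ B.powerset, f (T ∪ S') := by
  rw [← Finset.sum_product']
  apply Finset.sum_nbij' (i := fun S => (S ∩ A, S ∩ B)) (j := fun q => q.1 ∪ q.2)
  · intro S _
    simp only [Finset.mem_product, Finset.mem_powerset]
    exact ⟨Finset.inter_subset_right, Finset.inter_subset_right⟩
  · intro q hq
    simp only [Finset.mem_product, Finset.mem_powerset] at hq
    simp only [Finset.mem_powerset]
    exact Finset.union_subset (hq.1.trans Finset.subset_union_left)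
      (hq.2.trans Finset.subset_union_right)
  · intro S hS
    simp only [Finset.mem_powerset] at hS
    rw [← Finset.inter_union_distrib_left, Finset.inter_eq_left.mpr hS]
  · intro q hq
    simp only [Finset.mem_product, Finset.mem_powerset] at hq
    have h1 : (q.1 ∪ q.2) ∩ A = q.1 := by
      rw [Finset.union_inter_distrib_right, Finset.inter_eq_left.mpr hq.1,
        Finset.disjoint_iff_inter_eq_empty.mp (hd.symm.mono_left hq.2), Finset.union_empty]
    have h2 : (q.1 ∪ q.2) ∩ B = q.2 := by
      rw [Finset.union_inter_distrib_right, Finset.inter_eq_left.mpr hq.2,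
        Finset.disjoint_iff_inter_eq_empty.mp (hd.mono_left hq.1), Finset.empty_union]
    exact Prod.ext h1 h2
  · intro S hS
    simp only [Finset.mem_powerset] at hS
    rw [← Finset.inter_union_distrib_left, Finset.inter_eq_left.mpr hS]

lemma icm {ℓ : ℕ} (Ψ : Finset (Fin ℓ × Fin ℓ)) (N : ℕ) (γ : Fin ℓ → ℤ)
    (hkill : ∀ m : Fin ℓ × Fin ℓ → ℕ, (∀ p, p ∉ Ψ → m p = 0) → (∃ p, m p = N + 1) →
      hprodZ (fun a => γ a + wfv m a) = 0) :
    ∑ n ∈ BoxS Ψ N, ∑ T ∈ Ψ.powerset,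
        (-1 : SymFZ) ^ T.card * hprodZ (fun a => γ a + wfv n a + eps T a)
      = hprodZ γ := by
  classical
  rw [← Finset.sum_product']
  have hmaps : ∀ q ∈ (BoxS Ψ N) ×ˢ Ψ.powerset,
      (fun p => q.1 p + (if p ∈ q.2 then 1 else 0)) ∈ BoxS Ψ (N + 1) := by
    intro q hq
    rw [Finset.mem_product] at hq
    obtain ⟨hq1, hq2⟩ := hq
    rw [mem_BoxS] at hq1 ⊢
    rw [Finset.mem_powerset] at hq2
    constructor
    · intro p
      have := hq1.1 p
      split_ifs <;> omega
    · intro p hp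
      rw [hq1.2 p hp, if_neg (fun hmem => hp (hq2 hmem))]
  rw [← Finset.sum_fiberwise_of_maps_to hmaps]
  have hfib : ∀ m ∈ BoxS Ψ (N + 1),
      (∑ q ∈ ((BoxS Ψ N) ×ˢ Ψ.powerset).filter
          (fun q => (fun p => q.1 p + (if p ∈ q.2 then 1 else 0)) = m),
        (-1 : SymFZ) ^ q.2.card * hprodZ (fun a => γ a + wfv q.1 a + eps q.2 a))
      = (∑ q ∈ ((BoxS Ψ N) ×ˢ Ψ.powerset).filter
          (fun q => (fun p => q.1 p + (if p ∈ q.2 then 1 else 0)) = m),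
          (-1 : SymFZ) ^ q.2.card) * hprodZ (fun a => γ a + wfv m a) := by
    intro m _
    rw [Finset.sum_mul]
    apply Finset.sum_congr rfl
    intro q hq
    simp only [Finset.mem_filter] at hq
    have heq : (fun a => γ a + wfv q.1 a + eps q.2 a) = fun a => γ a + wfv m a := by
      funext a
      have : wfv m a = wfv q.1 a + eps q.2 a := by
        rw [← hq.2, wfv_add, wfv_indicator]
      rw [this]
      ring
    rw [heq]
  rw [Finset.sum_congr rfl hfib]
  have hzero : (fun _ => 0 : Fin ℓ × Fin ℓ → ℕ) ∈ BoxS Ψ (N + 1) :=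
    mem_BoxS.mpr ⟨fun p => Nat.zero_le _, fun p _ => rfl⟩
  rw [Finset.sum_eq_single_of_mem (fun _ => 0 : Fin ℓ × Fin ℓ → ℕ) hzero ?hzero2]
  · -- the `m = 0` term
    have hfilter : ((BoxS Ψ N) ×ˢ Ψ.powerset).filter
        (fun q => (fun p => q.1 p + (if p ∈ q.2 then 1 else 0)) = (fun _ => 0 : Fin ℓ × Fin ℓ → ℕ))
        = {((fun _ => 0 : Fin ℓ × Fin ℓ → ℕ), (∅ : Finset (Fin ℓ × Fin ℓ)))} := by
      ext q
      simp only [Finset.mem_filter, Finset.mem_singleton, Finset.mem_product,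
        Finset.mem_powerset]
      constructor
      · rintro ⟨⟨_, _⟩, heq⟩
        have hzeroq : ∀ p, q.1 p + (if p ∈ q.2 then 1 else 0) = 0 := fun p => congrFun heq p
        have hq1z : q.1 = fun _ => 0 := funext fun p => by have := hzeroq p; omega
        have hq2z : q.2 = ∅ := by
          apply Finset.eq_empty_of_forall_notMem
          intro p hp
          have := hzeroq p
          rw [if_pos hp] at this
          omega
        exact Prod.ext hq1z hq2z
      · rintro rfl
        refine ⟨⟨mem_BoxS.mpr ⟨fun p => Nat.zero_le _, fun p _ => rfl⟩, Finset.empty_subset _⟩, ?_⟩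
        funext p
        simp
    rw [hfilter, Finset.sum_singleton, Finset.card_empty, pow_zero]
    have : (fun a => γ a + wfv (fun _ => 0) a) = γ := by
      funext a
      rw [wfv_zero, add_zero]
    rw [this, one_mul]
  case hzero2 =>
    intro m hm hmne
    by_cases hbig : ∃ p, m p = N + 1
    · rw [hkill m (mem_BoxS.mp hm).2 hbig, mul_zero]
    · -- all `m p ≤ N`: the signed count vanishes
      push_neg at hbig
      have hmle : ∀ p, m p ≤ N := by
        intro p
        have := (mem_BoxS.mp hm).1 p
        have := hbig p
        omega
      have hcount : (∑ q ∈ ((BoxS Ψ N) ×ˢ Ψ.powerset).filter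
          (fun q => (fun p => q.1 p + (if p ∈ q.2 then 1 else 0)) = m),
          (-1 : SymFZ) ^ q.2.card)
          = ∑ T ∈ (Ψ.filter fun p => m p ≠ 0).powerset, (-1 : SymFZ) ^ T.card := by
        apply Finset.sum_nbij' (i := fun q => q.2)
          (j := fun T => ((fun p => m p - (if p ∈ T then 1 else 0)), T))
        · intro q hq
          simp only [Finset.mem_filter, Finset.mem_product, Finset.mem_powerset] at hq ⊢
          intro p hp
          have heqp : q.1 p + (if p ∈ q.2 then 1 else 0) = m p := congrFun hq.2 p
          rw [if_pos hp] at heqp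
          simp only [Finset.mem_filter]
          exact ⟨hq.1.2 hp, by omega⟩
        · intro T hT
          simp only [Finset.mem_powerset] at hT
          have hTsub : T ⊆ Ψ := fun p hp => (Finset.mem_filter.mp (hT hp)).1
          have hTne : ∀ p ∈ T, m p ≠ 0 := fun p hp => (Finset.mem_filter.mp (hT hp)).2
          simp only [Finset.mem_filter, Finset.mem_product, Finset.mem_powerset]
          refine ⟨⟨mem_BoxS.mpr ⟨?_, ?_⟩, hTsub⟩, ?_⟩
          · intro p
            have := hmle p
            split_ifs <;> omega
          · intro p hp
            rw [(mem_BoxS.mp hm).2 p hp, if_neg (fun hmem => hp (hTsub hmem))]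
          · funext p
            show m p - (if p ∈ T then 1 else 0) + (if p ∈ T then 1 else 0) = m p
            by_cases hp : p ∈ T
            · have := hTne p hp
              simp only [hp, if_true, ite_true]
              omega
            · simp only [hp, if_false, ite_false]
              omega
        · intro q hq
          simp only [Finset.mem_filter, Finset.mem_product, Finset.mem_powerset] at hq
          have h1 : (fun p => m p - (if p ∈ q.2 then 1 else 0)) = q.1 := by
            funext p
            show m p - (if p ∈ q.2 then 1 else 0) = q.1 p
            have heqp : q.1 p + (if p ∈ q.2 then 1 else 0) = m p := congrFun hq.2 p
            by_cases hp : p ∈ q.2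
            · simp only [hp, if_true, ite_true] at heqp ⊢
              omega
            · simp only [hp, if_false, ite_false] at heqp ⊢
              omega
          exact Prod.ext h1 rfl
        · intro T _
          rfl
        · intro q _
          rfl
      rw [hcount]
      have hne : (Ψ.filter fun p => m p ≠ 0).Nonempty := by
        have : ∃ p, m p ≠ 0 := by
          by_contra hc
          push_neg at hc
          exact hmne (funext fun p => hc p)
        obtain ⟨p, hp⟩ := this
        have hpmem : p ∈ Ψ := by
          by_contra hq
          exact hp ((mem_BoxS.mp hm).2 p hq)
        exact ⟨p, Finset.mem_filter.mpr ⟨hpmem, hp⟩⟩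
      have hintsum := Finset.sum_powerset_neg_one_pow_card_of_nonempty hne
      have hcast : (∑ T ∈ (Ψ.filter fun p => m p ≠ 0).powerset, (-1 : SymFZ) ^ T.card)
          = ((∑ T ∈ (Ψ.filter fun p => m p ≠ 0).powerset, (-1 : ℤ) ^ T.card : ℤ) : SymFZ) := by
        push_cast
        rfl
      rw [hcast, hintsum]
      simp

lemma catalanFn_spec' {ℓ : ℕ} (Ψ : Finset (Fin ℓ × Fin ℓ)) (hsub : Ψ ⊆ Dplus ℓ)
    (μ : Fin ℓ → ℤ) :
    specT1 (catalanFn Ψ μ)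
      = ∑ S ∈ (Dplus ℓ \ Ψ).powerset,
          (-1 : SymFZ) ^ S.card * specT1 (hprod fun a => μ a + eps S a) := by
  classical
  rw [specT1_catalanFn Ψ hsub μ]
  have hun : Ψ ∪ (Dplus ℓ \ Ψ) = Dplus ℓ := Finset.union_sdiff_of_subset hsub
  have step1 : ∀ n ∈ BoxS Ψ (Nb μ), specT1 (schur (fun a => μ a + wfv n a))
      = ∑ T ∈ Ψ.powerset, ∑ S' ∈ (Dplus ℓ \ Ψ).powerset,
          ((-1 : SymFZ) ^ S'.card *
            ((-1 : SymFZ) ^ T.card *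
              hprodZ (fun a => (fun b => μ b + eps S' b) a + wfv n a + eps T a))) := by
    intro n _
    rw [schurZ_expand]
    conv_lhs => rw [show Dplus ℓ = Ψ ∪ (Dplus ℓ \ Ψ) from hun.symm]
    rw [powerset_split Finset.disjoint_sdiff]
    apply Finset.sum_congr rfl
    intro T hT
    apply Finset.sum_congr rfl
    intro S' hS'
    simp only [Finset.mem_powerset] at hT hS'
    have hdisj : Disjoint T S' :=
      Finset.disjoint_sdiff.mono hT hS'
    have hcard : (T ∪ S').card = T.card + S'.card := Finset.card_union_of_disjoint hdisj
    have heps : eps (T ∪ S') = fun a => eps T a + eps S' a := by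
      funext a
      exact Finset.sum_union hdisj
    rw [hcard, heps, pow_add]
    have harg : (fun a => (μ a + wfv n a) + (eps T a + eps S' a))
        = fun a => (fun b => μ b + eps S' b) a + wfv n a + eps T a := by
      funext a
      ring
    rw [harg]
    ring
  rw [Finset.sum_congr rfl step1]
  have swap1 : ∀ n ∈ BoxS Ψ (Nb μ),
      (∑ T ∈ Ψ.powerset, ∑ S' ∈ (Dplus ℓ \ Ψ).powerset,
          ((-1 : SymFZ) ^ S'.card *
            ((-1 : SymFZ) ^ T.card *
              hprodZ (fun a => (fun b => μ b + eps S' b) a + wfv n a + eps T a))))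
      = ∑ S' ∈ (Dplus ℓ \ Ψ).powerset, ∑ T ∈ Ψ.powerset,
          ((-1 : SymFZ) ^ S'.card *
            ((-1 : SymFZ) ^ T.card *
              hprodZ (fun a => (fun b => μ b + eps S' b) a + wfv n a + eps T a))) :=
    fun n _ => Finset.sum_comm
  rw [Finset.sum_congr rfl swap1, Finset.sum_comm]
  apply Finset.sum_congr rfl
  intro S' _
  have hkill : ∀ m : Fin ℓ × Fin ℓ → ℕ, (∀ p, p ∉ Ψ → m p = 0) → (∃ p, m p = Nb μ + 1) →
      hprodZ (fun a => (fun b => μ b + eps S' b) a + wfv m a) = 0 := by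
    intro m hmsupp ⟨p0, hp0⟩
    by_contra hne
    have hpos := hprodZ_ne_zero_imp hne
    have hsupp : ∀ p : Fin ℓ × Fin ℓ, m p ≠ 0 → p.1 < p.2 := by
      intro p hp
      have hmem : p ∈ Ψ := by
        by_contra hq
        exact hp (hmsupp p hq)
      have := hsub hmem
      simpa [Dplus] using this
    have hb : ∀ a, -(μ a + eps S' a + (ℓ : ℤ)) ≤ wfv m a := by
      intro a
      have := hpos a
      simp only at this
      have hl : (0:ℤ) ≤ (ℓ : ℤ) := by positivity
      linarith
    have := bound_core μ S' m hsupp hb p0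
    omega
  have hicm := icm Ψ (Nb μ) (fun b => μ b + eps S' b) hkill
  have hpull : ∀ n ∈ BoxS Ψ (Nb μ),
      (∑ T ∈ Ψ.powerset,
          ((-1 : SymFZ) ^ S'.card * ((-1 : SymFZ) ^ T.card *
            hprodZ (fun a => (fun b => μ b + eps S' b) a + wfv n a + eps T a))))
      = (-1 : SymFZ) ^ S'.card * ∑ T ∈ Ψ.powerset,
          ((-1 : SymFZ) ^ T.card *
            hprodZ (fun a => (fun b => μ b + eps S' b) a + wfv n a + eps T a)) :=
    fun n _ => by rw [Finset.mul_sum]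
  rw [Finset.sum_congr rfl hpull, ← Finset.mul_sum, hicm, specT1_hprod]

/-- Part 2 at the level of `catalanFn` (proved below). -/
lemma catalanFn_spec {ℓ : ℕ} (Ψ : Finset (Fin ℓ × Fin ℓ))
    (hΨ : IsRootIdeal Ψ) (μ : Fin ℓ → ℤ) :
    specT1 (catalanFn Ψ μ)
      = ∑ S ∈ (Dplus ℓ \ Ψ).powerset,
          (-1 : SymFZ) ^ S.card * specT1 (hprod fun a => μ a + eps S a) := by
  exact catalanFn_spec' Ψ hΨ.1 μ

end AuxProof

/-- At `t = 1`, Catalan operators reduce to multiplication by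
Catalan functions: for any indexed root ideal `(Ψ,μ)` and any `g ∈ Λ_ℤ`, the
operator induced by `H^Ψ_μ` on `Λ_ℤ = Λ/(t-1)` satisfies
`H^Ψ_μ|_{t=1}(g) = (H^Ψ_μ|_{t=1}(1))·g = H(Ψ;μ)(x;1)·g`.  (Since the projection
`π : Λ → Λ_ℤ` is surjective, this is stated with `g = π f` for `f : Λ`.) -/
theorem catalanOp_t1_is_mul {ℓ : ℕ} (Ψ : Finset (Fin ℓ × Fin ℓ))
    (hΨ : IsRootIdeal Ψ) (μ : Fin ℓ → ℤ) :
    ∀ f : SymF,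
      specT1 (catalanOp Ψ μ f) = specT1 (catalanOp Ψ μ 1) * specT1 f ∧
      specT1 (catalanOp Ψ μ f) = specT1 (catalanFn Ψ μ) * specT1 f := by
  intro f
  constructor
  · rw [catalanOp_spec, catalanOp_spec, map_one, mul_one]
  · rw [catalanOp_spec, catalanFn_spec Ψ hΨ μ]

end
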